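/- Fix an integer n ≥ 2 and set n̄ = n − 1/2. With the operators and functions defined in the context on ℝ^{2n+1}, the function u = (B+C)^{1/2} / (C·(A+C)^{n−1/2}) satisfies, at every point other than the origin: |∇₀u|² / u² = (2B−A)/(2C(C+B)) + n̄·2(AB − AC + BC)/(C²(C+A)) + n̄²·2B/(C(C+A)). -/

import Mathlib

noncomputable section

/-- The underlying space `ℝ^{2n+1}` of the anisotropic Heisenberg group
`Heis^n(1/2,1,…,1)`, with coordinates `(x, y, t)`. -/
abbrev Pt (n : ℕ) := (Fin n → ℝ) × (Fin n → ℝ) × ℝ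

/-- The anisotropy coefficients: `c₁ = 1/2`, `c_j = 1` for `j ≥ 2`. -/
def cc {n : ℕ} (j : Fin n) : ℝ := if (j : ℕ) = 0 then 1 / 2 else 1

/-- The left-invariant horizontal vector field `X_j f = ∂f/∂x_j − c_j y_j ∂f/∂t`. -/
def Xop {n : ℕ} (j : Fin n) (f : Pt n → ℝ) (p : Pt n) : ℝ :=
  fderiv ℝ f p (Pi.single j 1, 0, -(cc j) * p.2.1 j)

/-- The left-invariant horizontal vector field `Y_j f = ∂f/∂y_j + c_j x_j ∂f/∂t`. -/
def Yop {n : ℕ} (j : Fin n) (f : Pt n → ℝ) (p : Pt n) : ℝ :=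
  fderiv ℝ f p (0, Pi.single j 1, cc j * p.1 j)

/-- The sub-Laplacian `ℒ f = Σⱼ XⱼXⱼ f + YⱼYⱼ f`. -/
def subLap {n : ℕ} (f : Pt n → ℝ) (p : Pt n) : ℝ :=
  ∑ j : Fin n, (Xop j (Xop j f) p + Yop j (Yop j f) p)

/-- The squared norm of the horizontal gradient: `|∇₀f|² = Σⱼ (Xⱼf)² + (Yⱼf)²`. -/
def gradSq {n : ℕ} (f : Pt n → ℝ) (p : Pt n) : ℝ :=
  ∑ j : Fin n, ((Xop j f p) ^ 2 + (Yop j f p) ^ 2)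

/-- The ∞-Laplacian `ℒ_∞ f = (1/2) Σⱼ [Xⱼ(|∇₀f|²)·Xⱼf + Yⱼ(|∇₀f|²)·Yⱼf]`. -/
def infLap {n : ℕ} (f : Pt n → ℝ) (p : Pt n) : ℝ :=
  (1 / 2) * ∑ j : Fin n,
    (Xop j (gradSq f) p * Xop j f p + Yop j (gradSq f) p * Yop j f p)

/-- `A = (x₁² + y₁²)/4`. -/
def Afun {n : ℕ} [NeZero n] (p : Pt n) : ℝ := (p.1 0 ^ 2 + p.2.1 0 ^ 2) / 4

/-- `B = A + (1/2) Σ_{j≥2} (x_j² + y_j²)`. -/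
def Bfun {n : ℕ} [NeZero n] (p : Pt n) : ℝ :=
  Afun p + (1 / 2) * ∑ j ∈ Finset.univ \ {0}, (p.1 j ^ 2 + p.2.1 j ^ 2)

/-- `C = √(B² + t²)`. -/
def Cfun {n : ℕ} [NeZero n] (p : Pt n) : ℝ :=
  Real.sqrt (Bfun p ^ 2 + p.2.2 ^ 2)

/-- The fundamental solution `u = (B+C)^{1/2} / (C (A+C)^{n−1/2})` (up to a constant). -/
def ufun (n : ℕ) [NeZero n] (p : Pt n) : ℝ :=
  Real.sqrt (Bfun p + Cfun p) / (Cfun p * (Afun p + Cfun p) ^ ((n : ℝ) - 1 / 2))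

/-- The homogeneous quasinorm
`N = 2^{1/2+1/(4n)} C^{1/(2n)} (A+C)^{1/2−1/(4n)} / (B+C)^{1/(4n)}`. -/
def Nfun (n : ℕ) [NeZero n] (p : Pt n) : ℝ :=
  2 ^ ((1 : ℝ) / 2 + 1 / (4 * n)) * Cfun p ^ ((1 : ℝ) / (2 * n))
    * (Afun p + Cfun p) ^ ((1 : ℝ) / 2 - 1 / (4 * n))
    / (Bfun p + Cfun p) ^ ((1 : ℝ) / (4 * n))

end

noncomputable section


namespace GradAux
open Real Finset

variable {n : ℕ} [NeZero n]

def dA (p v : Pt n) : ℝ := (p.1 0 * v.1 0 + p.2.1 0 * v.2.1 0) / 2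

def dB (p v : Pt n) : ℝ :=
  dA p v + ∑ j ∈ Finset.univ \ {0}, (p.1 j * v.1 j + p.2.1 j * v.2.1 j)

def dC (p v : Pt n) : ℝ := (Bfun p * dB p v + p.2.2 * v.2.2) / Cfun p

lemma Afun_nonneg (p : Pt n) : 0 ≤ Afun p := by unfold Afun; positivity

lemma sum_nonneg' (p : Pt n) :
    0 ≤ ∑ j ∈ Finset.univ \ {0}, (p.1 j ^ 2 + p.2.1 j ^ 2) :=
  Finset.sum_nonneg fun j _ => by positivity

lemma Bfun_nonneg (p : Pt n) : 0 ≤ Bfun p := by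
  have h1 := sum_nonneg' p; have h2 := Afun_nonneg p; unfold Bfun; linarith

lemma base_pos (p : Pt n) (hp : p ≠ 0) : 0 < Bfun p ^ 2 + p.2.2 ^ 2 := by
  rcases eq_or_ne p.2.2 0 with ht | ht
  · have hB : Bfun p ≠ 0 := by
      intro h0
      apply hp
      have hA : Afun p = 0 ∧ (∑ j ∈ Finset.univ \ {0}, (p.1 j ^ 2 + p.2.1 j ^ 2)) = 0 := by
        have h1 := sum_nonneg' p; have h2 := Afun_nonneg p
        unfold Bfun at h0
        constructor <;> linarith
      have hx0 : p.1 0 = 0 ∧ p.2.1 0 = 0 := by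
        have := hA.1; unfold Afun at this
        constructor <;> nlinarith [sq_nonneg (p.1 0), sq_nonneg (p.2.1 0)]
      have hsum := (Finset.sum_eq_zero_iff_of_nonneg (fun j _ => by positivity)).1 hA.2
      have hcoord : ∀ j : Fin n, p.1 j = 0 ∧ p.2.1 j = 0 := by
        intro j
        rcases eq_or_ne j 0 with rfl | hj
        · exact hx0
        · have := hsum j (by simp [hj])
          constructor <;> nlinarith [sq_nonneg (p.1 j), sq_nonneg (p.2.1 j)]
      have hpp : p = (p.1, p.2.1, p.2.2) := rfl
      rw [hpp, ht]
      refine Prod.ext ?_ (Prod.ext ?_ rfl) <;> funext j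
      · exact (hcoord j).1
      · exact (hcoord j).2
    have h2 := Bfun_nonneg p
    have : 0 < Bfun p := lt_of_le_of_ne h2 (Ne.symm hB)
    positivity
  · positivity

lemma hx0' (w c0 : ℝ) : HasDerivAt (fun s : ℝ => c0 + s * w) w 0 := by
  simpa using ((hasDerivAt_id (0:ℝ)).mul_const w).const_add c0

omit [NeZero n] in
lemma coord1 (p v : Pt n) (s : ℝ) (j : Fin n) : (p + s • v).1 j = p.1 j + s * v.1 j := by
  simp [Prod.fst_add]

omit [NeZero n] in
lemma coord2 (p v : Pt n) (s : ℝ) (j : Fin n) : (p + s • v).2.1 j = p.2.1 j + s * v.2.1 j := by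
  simp [Prod.snd_add]

omit [NeZero n] in
lemma coord3 (p v : Pt n) (s : ℝ) : (p + s • v).2.2 = p.2.2 + s * v.2.2 := by
  simp [Prod.snd_add]

lemma hA1 (p v : Pt n) : HasDerivAt (fun s : ℝ => Afun (p + s • v)) (dA p v) 0 := by
  have he : (fun s : ℝ => Afun (p + s • v))
      = fun s => ((p.1 0 + s * v.1 0) ^ 2 + (p.2.1 0 + s * v.2.1 0) ^ 2) / 4 := by
    funext s; rw [Afun, coord1, coord2]
  rw [he]
  have h := (((hx0' (v.1 0) (p.1 0)).fun_pow 2).fun_add ((hx0' (v.2.1 0) (p.2.1 0)).fun_pow 2)).div_const 4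
  refine h.congr_deriv ?_
  simp [dA]; ring

lemma hB1 (p v : Pt n) : HasDerivAt (fun s : ℝ => Bfun (p + s • v)) (dB p v) 0 := by
  have hS : HasDerivAt
      (fun s : ℝ => ∑ j ∈ Finset.univ \ {0}, ((p + s • v).1 j ^ 2 + (p + s • v).2.1 j ^ 2))
      (∑ j ∈ Finset.univ \ {0}, (2 * (p.1 j * v.1 j) + 2 * (p.2.1 j * v.2.1 j))) 0 := by
    apply HasDerivAt.fun_sum
    intro j _
    have he : (fun s : ℝ => (p + s • v).1 j ^ 2 + (p + s • v).2.1 j ^ 2)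
        = fun s => (p.1 j + s * v.1 j) ^ 2 + (p.2.1 j + s * v.2.1 j) ^ 2 := by
      funext s; rw [coord1, coord2]
    rw [he]
    convert ((hx0' (v.1 j) (p.1 j)).fun_pow 2).fun_add ((hx0' (v.2.1 j) (p.2.1 j)).fun_pow 2) using 1
    ring
  have he : (fun s : ℝ => Bfun (p + s • v))
      = fun s => Afun (p + s • v)
        + (1/2) * ∑ j ∈ Finset.univ \ {0}, ((p + s • v).1 j ^ 2 + (p + s • v).2.1 j ^ 2) := by
    funext s; rw [Bfun]
  rw [he]
  refine ((hA1 p v).fun_add (hS.const_mul (1/2))).congr_deriv ?_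
  rw [dB, Finset.mul_sum]
  congr 1
  apply Finset.sum_congr rfl
  intro j _; ring

lemma hC1 (p v : Pt n) (hp : 0 < Bfun p ^ 2 + p.2.2 ^ 2) :
    HasDerivAt (fun s : ℝ => Cfun (p + s • v)) (dC p v) 0 := by
  have ht1 : HasDerivAt (fun s : ℝ => (p + s • v).2.2) (v.2.2) 0 := by
    have he : (fun s : ℝ => (p + s • v).2.2) = fun s => p.2.2 + s * v.2.2 := by
      funext s; rw [coord3]
    rw [he]; exact hx0' _ _
  have hg : HasDerivAt (fun s : ℝ => Bfun (p + s • v) ^ 2 + (p + s • v).2.2 ^ 2)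
      (2 * Bfun p * dB p v + 2 * p.2.2 * v.2.2) 0 := by
    refine (((hB1 p v).fun_pow 2).fun_add (ht1.fun_pow 2)).congr_deriv ?_
    simp
  have he : (fun s : ℝ => Cfun (p + s • v))
      = fun s => Real.sqrt (Bfun (p + s • v) ^ 2 + (p + s • v).2.2 ^ 2) := by
    funext s; rw [Cfun]
  rw [he]
  have hne : Bfun (p + (0:ℝ) • v) ^ 2 + (p + (0:ℝ) • v).2.2 ^ 2 ≠ 0 := by
    simpa using hp.ne'
  convert hg.sqrt hne using 1
  rw [dC, Cfun]
  simp; ring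

lemma hdiffAt (p : Pt n) (hp : 0 < Bfun p ^ 2 + p.2.2 ^ 2) :
    DifferentiableAt ℝ (ufun n) p := by
  have hc : 0 < Cfun p := Real.sqrt_pos.2 hp
  have hbc : 0 < Bfun p + Cfun p := by have := Bfun_nonneg p; linarith
  have hac : 0 < Afun p + Cfun p := by have := Afun_nonneg p; linarith
  have hr : 0 < (Afun p + Cfun p) ^ ((n:ℝ) - 1/2) := Real.rpow_pos_of_pos hac _
  have hA : DifferentiableAt ℝ (fun q : Pt n => Afun q) p := by
    unfold Afun; fun_prop
  have hB : DifferentiableAt ℝ (fun q : Pt n => Bfun q) p := by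
    unfold Bfun Afun; fun_prop
  have ht : DifferentiableAt ℝ (fun q : Pt n => q.2.2) p := by fun_prop
  have hC : DifferentiableAt ℝ (fun q : Pt n => Cfun q) p := by
    unfold Cfun
    exact ((hB.pow 2).add (ht.pow 2)).sqrt hp.ne'
  have hN : DifferentiableAt ℝ (fun q : Pt n => Real.sqrt (Bfun q + Cfun q)) p :=
    (hB.add hC).sqrt hbc.ne'
  have hD : DifferentiableAt ℝ
      (fun q : Pt n => Cfun q * (Afun q + Cfun q) ^ ((n:ℝ) - 1/2)) p :=
    hC.mul ((hA.add hC).rpow_const (Or.inl hac.ne'))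
  have hinv : DifferentiableAt ℝ
      (fun q : Pt n => (Cfun q * (Afun q + Cfun q) ^ ((n:ℝ) - 1/2))⁻¹) p :=
    hD.inv (mul_pos hc hr).ne'
  have H : DifferentiableAt ℝ
      (fun q : Pt n => Real.sqrt (Bfun q + Cfun q)
        * (Cfun q * (Afun q + Cfun q) ^ ((n:ℝ) - 1/2))⁻¹) p := hN.mul hinv
  have he : ufun n = fun q : Pt n => Real.sqrt (Bfun q + Cfun q)
      * (Cfun q * (Afun q + Cfun q) ^ ((n:ℝ) - 1/2))⁻¹ := by
    funext q; rw [ufun, div_eq_mul_inv]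
  rw [he]
  exact H

lemma fderiv_ufun (p : Pt n) (hp : 0 < Bfun p ^ 2 + p.2.2 ^ 2) (v : Pt n) :
    fderiv ℝ (ufun n) p v =
      ufun n p * ((dB p v + dC p v) / (2 * (Bfun p + Cfun p)) - dC p v / Cfun p
        - ((n:ℝ) - 1/2) * ((dA p v + dC p v) / (Afun p + Cfun p))) := by
  have hc : 0 < Cfun p := Real.sqrt_pos.2 hp
  have hbc : 0 < Bfun p + Cfun p := by have := Bfun_nonneg p; linarith
  have hac : 0 < Afun p + Cfun p := by have := Afun_nonneg p; linarith
  have hr : 0 < (Afun p + Cfun p) ^ ((n:ℝ) - 1/2) := Real.rpow_pos_of_pos hac _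
  have hN : HasDerivAt (fun s : ℝ => Real.sqrt (Bfun (p + s • v) + Cfun (p + s • v)))
      ((dB p v + dC p v) / (2 * Real.sqrt (Bfun p + Cfun p))) 0 := by
    convert ((hB1 p v).fun_add (hC1 p v hp)).sqrt (x := (0:ℝ)) ?_ using 1
    · simp
    · simpa using hbc.ne'
  have hR : HasDerivAt
      (fun s : ℝ => (Afun (p + s • v) + Cfun (p + s • v)) ^ ((n:ℝ) - 1/2))
      ((dA p v + dC p v) * ((n:ℝ) - 1/2) * (Afun p + Cfun p) ^ ((n:ℝ) - 1/2 - 1)) 0 := by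
    convert ((hA1 p v).fun_add (hC1 p v hp)).rpow_const (p := (n:ℝ) - 1/2) ?_ using 1
    · simp
    · left; simpa using hac.ne'
  have hD : HasDerivAt
      (fun s : ℝ => Cfun (p + s • v) * (Afun (p + s • v) + Cfun (p + s • v)) ^ ((n:ℝ) - 1/2))
      (dC p v * (Afun p + Cfun p) ^ ((n:ℝ) - 1/2)
        + Cfun p * ((dA p v + dC p v) * ((n:ℝ) - 1/2) * (Afun p + Cfun p) ^ ((n:ℝ) - 1/2 - 1)))
      0 := by
    refine ((hC1 p v hp).fun_mul hR).congr_deriv ?_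
    simp
  have hDne : Cfun (p + (0:ℝ) • v)
      * (Afun (p + (0:ℝ) • v) + Cfun (p + (0:ℝ) • v)) ^ ((n:ℝ) - 1/2) ≠ 0 := by
    simpa using (mul_pos hc hr).ne'
  have hu1 := hN.fun_div hD hDne
  simp only [zero_smul, add_zero] at hu1
  have h1 : fderiv ℝ (ufun n) p v = deriv (fun s : ℝ => ufun n (p + s • v)) 0 := by
    rw [← (hdiffAt p hp).lineDeriv_eq_fderiv]; rfl
  rw [h1]
  simp only [ufun]
  rw [hu1.deriv]
  rw [Real.rpow_sub_one hac.ne']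
  have hsb : Real.sqrt (Bfun p + Cfun p) * Real.sqrt (Bfun p + Cfun p) = Bfun p + Cfun p :=
    Real.mul_self_sqrt hbc.le
  have hsbpos : 0 < Real.sqrt (Bfun p + Cfun p) := Real.sqrt_pos.2 hbc
  set sb := Real.sqrt (Bfun p + Cfun p) with hsbdef
  set r := (Afun p + Cfun p) ^ ((n:ℝ) - 1/2) with hrdef
  have e1 : (dB p v + dC p v) / (2 * sb) = sb * (dB p v + dC p v) / (2 * (Bfun p + Cfun p)) := by
    rw [div_eq_div_iff (by positivity) (by positivity)]
    linear_combination (-2 : ℝ) * (dB p v + dC p v) * hsb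
  rw [e1]
  field_simp
  ring_nf

lemma cc_zero : cc (0 : Fin n) = 1/2 := by simp [cc]

lemma cc_ne {j : Fin n} (hj : j ≠ 0) : cc j = 1 := by
  have h : (j:ℕ) ≠ 0 := by
    intro h; exact hj (Fin.ext (by simpa using h))
  simp [cc, h]

lemma sum_single_mul (f : Fin n → ℝ) (j : Fin n) (hj : j ≠ 0) :
    ∑ j' ∈ Finset.univ \ ({0} : Finset (Fin n)),
      f j' * (Pi.single j (1:ℝ) : Fin n → ℝ) j' = f j := by
  rw [Finset.sum_eq_single_of_mem j (by simp [hj])]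
  · simp
  · intro b _ hb
    simp [Pi.single_apply, hb]

lemma sum_single_zero (f : Fin n → ℝ) :
    ∑ j' ∈ Finset.univ \ ({0} : Finset (Fin n)),
      f j' * (Pi.single (0 : Fin n) (1:ℝ) : Fin n → ℝ) j' = 0 := by
  apply Finset.sum_eq_zero
  intro b hb
  have hb' : b ≠ 0 := by simpa using (Finset.mem_sdiff.1 hb).2
  simp [Pi.single_apply, hb']

lemma dA_X (p : Pt n) (j : Fin n) :
    dA p (Pi.single j 1, 0, -(cc j) * p.2.1 j)
      = (if j = 0 then (1:ℝ) else 0) * (cc j * p.1 j) := by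
  rcases eq_or_ne j 0 with rfl | hj
  · simp [dA, cc_zero]
    ring
  · have h0 : (0 : Fin n) ≠ j := Ne.symm hj
    simp [dA, Pi.single_apply, hj, h0]

lemma dA_Y (p : Pt n) (j : Fin n) :
    dA p (0, Pi.single j 1, cc j * p.1 j)
      = (if j = 0 then (1:ℝ) else 0) * (cc j * p.2.1 j) := by
  rcases eq_or_ne j 0 with rfl | hj
  · simp [dA, cc_zero]
    ring
  · have h0 : (0 : Fin n) ≠ j := Ne.symm hj
    simp [dA, Pi.single_apply, hj, h0]

lemma dB_X (p : Pt n) (j : Fin n) :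
    dB p (Pi.single j 1, 0, -(cc j) * p.2.1 j) = cc j * p.1 j := by
  rw [dB, dA_X]
  simp only [Pi.zero_apply, mul_zero, add_zero]
  rcases eq_or_ne j 0 with rfl | hj
  · rw [sum_single_zero p.1]
    simp
  · rw [sum_single_mul p.1 j hj]
    simp [hj, cc_ne hj]

lemma dB_Y (p : Pt n) (j : Fin n) :
    dB p (0, Pi.single j 1, cc j * p.1 j) = cc j * p.2.1 j := by
  rw [dB, dA_Y]
  simp only [Pi.zero_apply, mul_zero, zero_add, zero_mul]
  rcases eq_or_ne j 0 with rfl | hj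
  · rw [sum_single_zero p.2.1]
    simp
  · rw [sum_single_mul p.2.1 j hj]
    simp [hj, cc_ne hj]

end GradAux

set_option maxHeartbeats 1000000 in
open GradAux in
/-- The squared horizontal gradient of `u = (B+C)^{1/2}/(C (A+C)^{n−1/2})` satisfies, away
from the origin and with `n̄ = n − 1/2`:
`|∇₀u|²/u² = (2B−A)/(2C(C+B)) + n̄·2(AB−AC+BC)/(C²(C+A)) + n̄²·2B/(C(C+A))`. -/
theorem gradSq_ufun_div_sq (n : ℕ) [NeZero n] (hn : 2 ≤ n) :
    ∀ p : Pt n, p ≠ 0 →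
      gradSq (ufun n) p / (ufun n p) ^ 2 =
        (2 * Bfun p - Afun p) / (2 * Cfun p * (Cfun p + Bfun p))
        + ((n : ℝ) - 1 / 2) *
            (2 * (Afun p * Bfun p - Afun p * Cfun p + Bfun p * Cfun p)
              / (Cfun p ^ 2 * (Cfun p + Afun p)))
        + ((n : ℝ) - 1 / 2) ^ 2 *
            (2 * Bfun p / (Cfun p * (Cfun p + Afun p))) := by
  intro p hp
  have hp2 := base_pos p hp
  have hc : 0 < Cfun p := Real.sqrt_pos.2 hp2
  have hbc : 0 < Bfun p + Cfun p := by have := Bfun_nonneg p; linarith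
  have hac : 0 < Afun p + Cfun p := by have := Afun_nonneg p; linarith
  have hc2 : Cfun p ^ 2 = Bfun p ^ 2 + p.2.2 ^ 2 := Real.sq_sqrt hp2.le
  have hr : 0 < (Afun p + Cfun p) ^ ((n:ℝ) - 1/2) := Real.rpow_pos_of_pos hac _
  have hu : 0 < ufun n p := by
    rw [ufun]; exact div_pos (Real.sqrt_pos.2 hbc) (mul_pos hc hr)
  set a := Afun p with ha
  set b := Bfun p with hb
  set c := Cfun p with hcdef
  set t := p.2.2 with htdef
  set γ : ℝ := (n:ℝ) - 1/2 with hγ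
  set u := ufun n p with hu0
  have hXj : ∀ j : Fin n, Xop j (ufun n) p = u *
      (((cc j * p.1 j) + (b * (cc j * p.1 j) + t * (-(cc j) * p.2.1 j)) / c) / (2 * (b + c))
        - ((b * (cc j * p.1 j) + t * (-(cc j) * p.2.1 j)) / c) / c
        - γ * (((if j = 0 then (1:ℝ) else 0) * (cc j * p.1 j)
            + (b * (cc j * p.1 j) + t * (-(cc j) * p.2.1 j)) / c) / (a + c))) := by
    intro j
    rw [Xop, fderiv_ufun p hp2, dC, dB_X, dA_X]
  have hYj : ∀ j : Fin n, Yop j (ufun n) p = u *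
      (((cc j * p.2.1 j) + (b * (cc j * p.2.1 j) + t * (cc j * p.1 j)) / c) / (2 * (b + c))
        - ((b * (cc j * p.2.1 j) + t * (cc j * p.1 j)) / c) / c
        - γ * (((if j = 0 then (1:ℝ) else 0) * (cc j * p.2.1 j)
            + (b * (cc j * p.2.1 j) + t * (cc j * p.1 j)) / c) / (a + c))) := by
    intro j
    rw [Yop, fderiv_ufun p hp2, dC, dB_Y, dA_Y]
  have h1 : ∀ X Y : ℝ, ((b * X + t * (-Y)) / c) ^ 2 + ((b * Y + t * X) / c) ^ 2
      = X ^ 2 + Y ^ 2 := by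
    intro X Y
    rw [div_pow, div_pow, ← add_div, div_eq_iff (pow_ne_zero 2 hc.ne')]
    linear_combination (-(X ^ 2 + Y ^ 2)) * hc2
  have h2 : ∀ X Y : ℝ, X * ((b * X + t * (-Y)) / c) + Y * ((b * Y + t * X) / c)
      = (X ^ 2 + Y ^ 2) * (b / c) := by
    intro X Y; field_simp; ring
  have hterm : ∀ j : Fin n,
      Xop j (ufun n) p ^ 2 + Yop j (ufun n) p ^ 2
      = u ^ 2 * (((cc j * p.1 j) ^ 2 + (cc j * p.2.1 j) ^ 2) *
          ((1 / (2 * (b + c)) - γ * (if j = 0 then (1:ℝ) else 0) / (a + c)) ^ 2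
            + (1 / (2 * (b + c)) - 1 / c - γ / (a + c)) ^ 2
            + 2 * (1 / (2 * (b + c)) - γ * (if j = 0 then (1:ℝ) else 0) / (a + c))
              * (1 / (2 * (b + c)) - 1 / c - γ / (a + c)) * (b / c))) := by
    intro j
    rw [hXj j, hYj j]
    linear_combination
      (u ^ 2 * (1 / (2 * (b + c)) - 1 / c - γ / (a + c)) ^ 2)
          * h1 (cc j * p.1 j) (cc j * p.2.1 j)
        + (u ^ 2 * 2 * (1 / (2 * (b + c)) - γ * (if j = 0 then (1:ℝ) else 0) / (a + c))
            * (1 / (2 * (b + c)) - 1 / c - γ / (a + c)))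
          * h2 (cc j * p.1 j) (cc j * p.2.1 j)
  -- sum over indices
  have e1 : gradSq (ufun n) p = ∑ j : Fin n,
      (u ^ 2 * (((cc j * p.1 j) ^ 2 + (cc j * p.2.1 j) ^ 2) *
          ((1 / (2 * (b + c)) - γ * (if j = 0 then (1:ℝ) else 0) / (a + c)) ^ 2
            + (1 / (2 * (b + c)) - 1 / c - γ / (a + c)) ^ 2
            + 2 * (1 / (2 * (b + c)) - γ * (if j = 0 then (1:ℝ) else 0) / (a + c))
              * (1 / (2 * (b + c)) - 1 / c - γ / (a + c)) * (b / c)))) := by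
    rw [gradSq]; exact Finset.sum_congr rfl fun j _ => hterm j
  rw [e1, Finset.sum_eq_sum_sdiff_singleton_add (Finset.mem_univ (0 : Fin n))]
  have e2 : ∑ j ∈ Finset.univ \ ({0} : Finset (Fin n)),
      (u ^ 2 * (((cc j * p.1 j) ^ 2 + (cc j * p.2.1 j) ^ 2) *
          ((1 / (2 * (b + c)) - γ * (if j = 0 then (1:ℝ) else 0) / (a + c)) ^ 2
            + (1 / (2 * (b + c)) - 1 / c - γ / (a + c)) ^ 2
            + 2 * (1 / (2 * (b + c)) - γ * (if j = 0 then (1:ℝ) else 0) / (a + c))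
              * (1 / (2 * (b + c)) - 1 / c - γ / (a + c)) * (b / c))))
      = (u ^ 2 * ((1 / (2 * (b + c))) ^ 2
            + (1 / (2 * (b + c)) - 1 / c - γ / (a + c)) ^ 2
            + 2 * (1 / (2 * (b + c)))
              * (1 / (2 * (b + c)) - 1 / c - γ / (a + c)) * (b / c)))
          * ∑ j ∈ Finset.univ \ ({0} : Finset (Fin n)), (p.1 j ^ 2 + p.2.1 j ^ 2) := by
    rw [Finset.mul_sum]
    apply Finset.sum_congr rfl
    intro j hj
    have hj0 : j ≠ 0 := by simpa using (Finset.mem_sdiff.1 hj).2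
    rw [cc_ne hj0, if_neg hj0]
    ring
  have hsum : ∑ j ∈ Finset.univ \ ({0} : Finset (Fin n)), (p.1 j ^ 2 + p.2.1 j ^ 2)
      = 2 * (b - a) := by
    have hBdef : b = a + (1/2) *
        ∑ j ∈ Finset.univ \ ({0} : Finset (Fin n)), (p.1 j ^ 2 + p.2.1 j ^ 2) := rfl
    linarith
  rw [e2, hsum]
  have hA0 : (cc (0 : Fin n) * p.1 0) ^ 2 + (cc (0 : Fin n) * p.2.1 0) ^ 2 = a := by
    rw [cc_zero, ha, Afun]; ring
  rw [if_pos rfl, hA0]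
  -- final algebraic identity
  have hune : u ^ 2 ≠ 0 := pow_ne_zero 2 hu.ne'
  rw [div_eq_iff hune]
  have hb0 : (0:ℝ) ≤ b := Bfun_nonneg p
  have ha0 : (0:ℝ) ≤ a := Afun_nonneg p
  have hcb : c + b ≠ 0 := by positivity
  have hca : c + a ≠ 0 := by positivity
  have hcne : c ≠ 0 := hc.ne'
  have hbcne : b + c ≠ 0 := hbc.ne'
  have hacne : a + c ≠ 0 := hac.ne'
  have hq0 : (1/(2*(b+c)))^2 + (1/(2*(b+c)) - 1/c)^2
      + 2*(1/(2*(b+c)))*(1/(2*(b+c)) - 1/c)*(b/c) = 1/(2*c*(c+b)) := by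
    field_simp
    ring
  have hq1 : -(2*(1/(a+c))) * (a*((1/(2*(b+c))) + (1/(2*(b+c)) - 1/c))*(1+b/c)
        + 2*(b-a)*((1/(2*(b+c)) - 1/c) + (1/(2*(b+c)))*(b/c)))
      = 2*(a*b - a*c + b*c)/(c^2*(c+a)) := by
    field_simp
    ring
  have hq2 : 2*a*(1/(a+c))^2*(1+b/c) + 2*(b-a)*(1/(a+c))^2 = 2*b/(c*(c+a)) := by
    field_simp
    ring
  linear_combination ((2*b - a) * hq0 + γ * hq1 + γ^2 * hq2) * u^2


end
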